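/- Let ν be an infinite regular cardinal with ν^{<ν} = ν, let A ⊆ ν^ν and let t ∈ ν^{<ν}, and suppose that A ∩ N_t is ν-Baire. Then A is ν-meager in N_t if and only if player I does not have a winning strategy in G^t_ν(A). -/

import Mathlib

universe u

noncomputable section

/-! ## Sequences of ordinals

`SeqLT o v` is the set `v^{<o}` of all sequences of ordinals `< v` of length `< o`
(for `o > 0`; values beyond the length are normalized to `0`).
`SeqFull o v` is the generalized Baire space `v^o` of all functions from ordinals `< o`
to ordinals `< v`. -/

/-- An element of `v^{<o}`: a sequence of ordinals `< v` of length `< o`. -/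
structure SeqLT (o v : Ordinal.{u}) : Type (u + 1) where
  len : Ordinal.{u}
  len_lt : len < o ⊔ 1
  val : Ordinal.{u} → Ordinal.{u}
  val_lt : ∀ β, β < len → val β < v
  val_zero : ∀ β, len ≤ β → val β = 0

namespace SeqLT

variable {o v : Ordinal.{u}}

/-- `s ⊆ t`, i.e. `t` end-extends `s`. -/
protected def le (s t : SeqLT o v) : Prop :=
  s.len ≤ t.len ∧ ∀ β, β < s.len → s.val β = t.val β

/-- `s ⊊ t`, i.e. `t` properly end-extends `s`. -/
protected def slt (s t : SeqLT o v) : Prop :=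
  s.le t ∧ s.len < t.len

/-- The empty sequence. -/
protected def empty (o v : Ordinal.{u}) : SeqLT o v where
  len := 0
  len_lt := lt_sup_iff.mpr (Or.inr zero_lt_one)
  val := fun _ => 0
  val_lt := fun β h => absurd h (show ¬ β < 0 by simp)
  val_zero := fun _ _ => rfl

/-- `s⌢⟨β⟩`: the sequence `s` extended by the single value `β`. -/
def snoc (s : SeqLT o v) (β : Ordinal.{u}) : SeqLT o v :=
  if h : s.len + 1 < o ⊔ 1 ∧ β < v then
    { len := s.len + 1
      len_lt := h.1
      val := fun γ => if γ = s.len then β else s.val γ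
      val_lt := fun γ hγ => by
        rcases eq_or_ne γ s.len with rfl | hne
        · simpa using h.2
        · simp only [if_neg hne]
          refine s.val_lt γ (lt_of_le_of_ne ?_ hne)
          rw [Ordinal.add_one_eq_succ] at hγ
          exact Order.lt_succ_iff.mp hγ
      val_zero := fun γ hγ => by
        have h1 : s.len < γ :=
          lt_of_lt_of_le (by rw [Ordinal.add_one_eq_succ]; exact Order.lt_succ s.len) hγ
        simp only [if_neg h1.ne']
        exact s.val_zero γ h1.le }
  else s

protected theorem le_refl (s : SeqLT o v) : s.le s :=
  ⟨le_rfl, fun _ _ => rfl⟩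

protected theorem le_trans {s t u : SeqLT o v} (h1 : s.le t) (h2 : t.le u) : s.le u :=
  ⟨h1.1.trans h2.1, fun β hβ => (h1.2 β hβ).trans (h2.2 β (lt_of_lt_of_le hβ h1.1))⟩

end SeqLT

/-- An element of the generalized Baire space `v^o`. -/
structure SeqFull (o v : Ordinal.{u}) : Type (u + 1) where
  val : Ordinal.{u} → Ordinal.{u}
  val_lt : ∀ β, β < o → val β < v
  val_zero : ∀ β, o ≤ β → val β = 0

/-- The restriction `x ↾ β` of `x : v^o` to an ordinal `β < o`. -/
def SeqFull.res {o v : Ordinal.{u}} (x : SeqFull o v) (β : Ordinal.{u}) : SeqLT o v :=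
  if h : β < o ⊔ 1 then
    { len := β
      len_lt := h
      val := fun γ => if γ < β then x.val γ else 0
      val_lt := fun γ hγ => by
        simp only [if_pos hγ]
        rcases lt_sup_iff.mp h with h' | h'
        · exact x.val_lt γ (hγ.trans h')
        · rw [Ordinal.lt_one_iff_zero] at h'
          exact absurd (h' ▸ hγ) (show ¬ γ < 0 by simp)
      val_zero := fun γ hγ => if_neg (not_lt.mpr hγ) }
  else SeqLT.empty o v

/-- `s ⊆ x`: the sequence `s` is an initial segment of `x : v^o`. -/
def SeqLT.prefixOf {o v : Ordinal.{u}} (s : SeqLT o v) (x : SeqFull o v) : Prop :=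
  ∀ β, β < s.len → s.val β = x.val β

/-! ## The bounded topology -/

/-- The basic open set `N_t`. -/
def basicOpen {o v : Ordinal.{u}} (t : SeqLT o v) : Set (SeqFull o v) :=
  {x | t.prefixOf x}

/-- The bounded (standard) topology on the generalized Baire space, generated by the
basic open sets `N_t`. -/
instance (o v : Ordinal.{u}) : TopologicalSpace (SeqFull o v) :=
  TopologicalSpace.generateFrom {U | ∃ t : SeqLT o v, U = basicOpen t}

/-- `A` is a nowhere dense subset of `B` (in the subspace topology on `B`). -/
def NowhereDenseIn {o v : Ordinal.{u}} (A B : Set (SeqFull o v)) : Prop :=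
  A ⊆ B ∧ interior (closure {x : ↥B | (x : SeqFull o v) ∈ A}) = ∅

/-- `A` is `o`-meager in `B`: `A ∩ B` is the union of (card of) `o` many nowhere dense
subsets of `B`. -/
def MeagerIn {o v : Ordinal.{u}} (A B : Set (SeqFull o v)) : Prop :=
  ∃ F : {β : Ordinal.{u} // β < o} → Set (SeqFull o v),
    (∀ i, NowhereDenseIn (F i) B) ∧ A ∩ B = ⋃ i, F i

/-- `A` is comeager in `B`: `B \ A` is meager in `B`. -/
def ComeagerIn {o v : Ordinal.{u}} (A B : Set (SeqFull o v)) : Prop :=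
  MeagerIn (B \ A) B

/-- `A` has the `o`-Baire property: for some open `U`, `A △ U` is meager. -/
def BaireSet {o v : Ordinal.{u}} (A : Set (SeqFull o v)) : Prop :=
  ∃ U : Set (SeqFull o v), IsOpen U ∧ MeagerIn (symmDiff A U) Set.univ

/-! ## Homomorphisms of `v^{<o}` -/

/-- A homomorphism: strictly extension-preserving map of `v^{<o}` to itself. -/
def IsHom {o v : Ordinal.{u}} (f : SeqLT o v → SeqLT o v) : Prop :=
  ∀ s t : SeqLT o v, s.slt t → (f s).slt (f t)

/-- `f` is dense: for every `s` and every `t ⊇ f(s)` there is `β < v` with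
`f(s⌢⟨β⟩) ⊇ t`. -/
def IsDenseMap {o v : Ordinal.{u}} (f : SeqLT o v → SeqLT o v) : Prop :=
  ∀ s t : SeqLT o v, (f s).le t → ∃ β, β < v ∧ t.le (f (s.snoc β))

/-- `u = ⋃_{α<γ} s α` for a chain `s`. -/
def IsUnionOfChain {o v : Ordinal.{u}} (u : SeqLT o v) (γ : Ordinal.{u})
    (s : Ordinal.{u} → SeqLT o v) : Prop :=
  (∀ α, α < γ → (s α).le u) ∧ ∀ β, β < u.len → ∃ α, α < γ ∧ β < (s α).len

/-- `f` is continuous: for every limit `γ < o` and every strictly increasing sequence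
`⟨s_α : α < γ⟩`, `f(⋃_{α<γ} s_α) = ⋃_{α<γ} f(s_α)`. -/
def IsContinuousMap {o v : Ordinal.{u}} (f : SeqLT o v → SeqLT o v) : Prop :=
  ∀ γ : Ordinal.{u}, Order.IsSuccLimit γ → γ < o →
    ∀ s : Ordinal.{u} → SeqLT o v, (∀ α β, α < β → β < γ → (s α).slt (s β)) →
      ∀ u : SeqLT o v, IsUnionOfChain u γ s → IsUnionOfChain (f u) γ fun α => f (s α)

/-- `y = f*(x) = ⋃_{α<o} f(x↾α)` for a homomorphism `f`. -/
def FStarVal {o v : Ordinal.{u}} (f : SeqLT o v → SeqLT o v) (x y : SeqFull o v) : Prop :=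
  (∀ α, α < o → (f (x.res α)).prefixOf y) ∧
    ∀ β, β < o → ∃ α, α < o ∧ β < (f (x.res α)).len

/-! ## Clubs and the almost Baire property -/

/-- `C` is a club (closed unbounded set) in the ordinal `o`. -/
def IsClubIn (C : Set Ordinal.{u}) (o : Ordinal.{u}) : Prop :=
  (∀ γ ∈ C, γ < o) ∧ (∀ β, β < o → ∃ γ ∈ C, β ≤ γ) ∧
    ∀ β, β < o → 0 < β → (∀ γ, γ < β → ∃ ξ ∈ C, γ < ξ ∧ ξ < β) → β ∈ C

/-- The set of functions coding elements of the club filter as characteristic functions. -/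
def ClSet (o v : Ordinal.{u}) : Set (SeqFull o v) :=
  {x | ∃ C : Set Ordinal.{u}, IsClubIn C o ∧ ∀ i ∈ C, x.val i ≠ 0}

/-- The set of functions coding elements of the nonstationary ideal. -/
def NsSet (o v : Ordinal.{u}) : Set (SeqFull o v) :=
  {x | ∃ C : Set Ordinal.{u}, IsClubIn C o ∧ ∀ i ∈ C, x.val i = 0}

/-- `A` is almost Baire: there is a dense homomorphism `f` with `ran f* ⊆ A`, or a dense
continuous homomorphism `f` with `f ∅ = ∅` and `ran f* ⊆ Aᶜ`. -/
def AlmostBaire {o v : Ordinal.{u}} (A : Set (SeqFull o v)) : Prop :=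
  ∃ f : SeqLT o v → SeqLT o v, IsHom f ∧ IsDenseMap f ∧
    ((∀ x y, FStarVal f x y → y ∈ A) ∨
      ((∀ x y, FStarVal f x y → y ∉ A) ∧ IsContinuousMap f ∧
        f (SeqLT.empty o v) = SeqLT.empty o v))

/-! ## Banach–Mazur games of length `o`

A run of the game is a strictly increasing sequence `⟨s_α : α < o⟩` in `v^{<o}`;
player I plays at even positions (`0` and limits count as even), player II at odd ones.
In the game `G^t` the first move of player I must extend `t`; taking `t = ∅` gives the
plain Banach–Mazur game. -/

/-- `γ` is an even ordinal (`0` and limits are even). -/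
def EvenOrd (γ : Ordinal.{u}) : Prop := ∃ δ : Ordinal.{u}, γ = 2 * δ

/-- `γ` is an odd ordinal. -/
def OddOrd (γ : Ordinal.{u}) : Prop := ∃ δ : Ordinal.{u}, γ = 2 * δ + 1

/-- The moves of a (partial) run, as a function on ordinals. -/
abbrev Play (o v : Ordinal.{u}) := Ordinal.{u} → SeqLT o v

/-- A strategy: given the length of the current position and the moves so far,
produce the next move. -/
abbrev Strat (o v : Ordinal.{u}) := Ordinal.{u} → Play o v → SeqLT o v

/-- `p` is a legal partial run of length `γ` of the game `G^t`: strictly increasing moves,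
the first move extends `t`, and the moves beyond `γ` are normalized to `∅`. -/
def IsPos {o v : Ordinal.{u}} (t : SeqLT o v) (p : Play o v) (γ : Ordinal.{u}) : Prop :=
  (∀ α β, α < β → β < γ → (p α).slt (p β)) ∧ (0 < γ → t.le (p 0)) ∧
    ∀ α, γ ≤ α → p α = SeqLT.empty o v

/-- The restriction of a run to its first `γ` moves. -/
def resPlay {o v : Ordinal.{u}} (p : Play o v) (γ : Ordinal.{u}) : Play o v :=
  fun α => if α < γ then p α else SeqLT.empty o v

/-- `m` is a legal move at the position `p` of length `γ` in the game `G^t`. -/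
def MoveOK {o v : Ordinal.{u}} (t : SeqLT o v) (p : Play o v) (γ : Ordinal.{u})
    (m : SeqLT o v) : Prop :=
  (∀ α, α < γ → (p α).slt m) ∧ (γ = 0 → t.le m)

/-- `σ` is a strategy for player I in `G^t`: it assigns a legal move to every legal
position of even length. -/
def LegalI {o v : Ordinal.{u}} (t : SeqLT o v) (σ : Strat o v) : Prop :=
  ∀ γ, γ < o → EvenOrd γ → ∀ p, IsPos t p γ → MoveOK t p γ (σ γ p)

/-- `σ` is a strategy for player II in `G^t`: it assigns a legal move to every legal
position of odd length. -/
def LegalII {o v : Ordinal.{u}} (t : SeqLT o v) (σ : Strat o v) : Prop :=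
  ∀ γ, γ < o → OddOrd γ → ∀ p, IsPos t p γ → MoveOK t p γ (σ γ p)

/-- The first `γ` moves of `p` follow the strategy `σ` of player I. -/
def FollowsI {o v : Ordinal.{u}} (σ : Strat o v) (p : Play o v) (γ : Ordinal.{u}) : Prop :=
  ∀ α, α < γ → EvenOrd α → p α = σ α (resPlay p α)

/-- The first `γ` moves of `p` follow the strategy `σ` of player II. -/
def FollowsII {o v : Ordinal.{u}} (σ : Strat o v) (p : Play o v) (γ : Ordinal.{u}) : Prop :=
  ∀ α, α < γ → OddOrd α → p α = σ α (resPlay p α)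

/-- `x = ⋃_{α<o} p α` is the outcome of the complete run `p`. -/
def IsOutcome {o v : Ordinal.{u}} (p : Play o v) (x : SeqFull o v) : Prop :=
  (∀ α, α < o → (p α).prefixOf x) ∧ ∀ β, β < o → ∃ α, α < o ∧ β < (p α).len

/-- Player I has a winning strategy in the Banach–Mazur game `G^t(A)` of length `o`. -/
def WinIStrat {o v : Ordinal.{u}} (t : SeqLT o v) (A : Set (SeqFull o v)) : Prop :=
  ∃ σ : Strat o v, LegalI t σ ∧
    ∀ p : Play o v, IsPos t p o → FollowsI σ p o → ∃ x, IsOutcome p x ∧ x ∈ A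

/-- Player II has a winning strategy in the Banach–Mazur game `G^t(A)` of length `o`. -/
def WinIIStrat {o v : Ordinal.{u}} (t : SeqLT o v) (A : Set (SeqFull o v)) : Prop :=
  ∃ σ : Strat o v, LegalII t σ ∧
    ∀ p : Play o v, IsPos t p o → FollowsII σ p o → ∃ x, IsOutcome p x ∧ x ∉ A

/-- `σ` is a tactic for player II: its moves depend only on the union of the previous moves. -/
def IsTacticII {o v : Ordinal.{u}} (t : SeqLT o v) (σ : Strat o v) : Prop :=
  ∃ f : SeqLT o v → SeqLT o v, ∀ γ, γ < o → OddOrd γ → ∀ p, IsPos t p γ →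
    ∀ u, IsUnionOfChain u γ p → σ γ p = f u

/-- Player II has a winning tactic in the Banach–Mazur game `G^t(A)` of length `o`. -/
def WinIITactic {o v : Ordinal.{u}} (t : SeqLT o v) (A : Set (SeqFull o v)) : Prop :=
  ∃ σ : Strat o v, LegalII t σ ∧ IsTacticII t σ ∧
    ∀ p : Play o v, IsPos t p o → FollowsII σ p o → ∃ x, IsOutcome p x ∧ x ∉ A

/-! ## Trees and perfect sets -/

/-- A subtree of `v^{<o}`: a downwards closed set of sequences. -/
def IsSubtree {o v : Ordinal.{u}} (T : Set (SeqLT o v)) : Prop :=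
  ∀ s ∈ T, ∀ r : SeqLT o v, r.le s → r ∈ T

/-- `T` is closed: every strictly increasing sequence in `T` of length `< o` has an
upper bound in `T`. -/
def TreeClosed {o v : Ordinal.{u}} (T : Set (SeqLT o v)) : Prop :=
  ∀ γ : Ordinal.{u}, γ < o → ∀ s : Ordinal.{u} → SeqLT o v,
    (∀ α β, α < β → β < γ → (s α).slt (s β)) → (∀ α, α < γ → s α ∈ T) →
      ∃ b ∈ T, ∀ α, α < γ → (s α).le b

/-- `t` is a direct successor of `s`. -/
def IsDirectSucc {o v : Ordinal.{u}} (s t : SeqLT o v) : Prop :=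
  s.slt t ∧ t.len = s.len + 1

/-- `T` is a perfect tree: a (nonempty) closed subtree whose splitting nodes are cofinal. -/
def IsPerfectTree {o v : Ordinal.{u}} (T : Set (SeqLT o v)) : Prop :=
  T.Nonempty ∧ IsSubtree T ∧ TreeClosed T ∧
    ∀ s ∈ T, ∃ t ∈ T, s.le t ∧
      ∃ t₁ ∈ T, ∃ t₂ ∈ T, IsDirectSucc t t₁ ∧ IsDirectSucc t t₂ ∧ t₁ ≠ t₂

/-- The body `[T]` of a tree `T`: the set of branches of length `o` through `T`. -/
def treeBody {o v : Ordinal.{u}} (T : Set (SeqLT o v)) : Set (SeqFull o v) :=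
  {x | ∀ α, α < o → x.res α ∈ T}

namespace BMaux

open Ordinal Cardinal

variable {ν : Cardinal.{u}}

theorem ord_sup_one (hν : ℵ₀ ≤ ν) : ν.ord ⊔ 1 = ν.ord := by
  have : (1 : Ordinal) < ν.ord := by
    rw [Cardinal.lt_ord]; simpa using lt_of_lt_of_le Cardinal.one_lt_aleph0 hν
  exact sup_eq_left.mpr this.le

theorem ord_limit (hν : ℵ₀ ≤ ν) : Order.IsSuccLimit ν.ord := Cardinal.isSuccLimit_ord hν

theorem succ_lt_ord (hν : ℵ₀ ≤ ν) {β : Ordinal.{u}} (hβ : β < ν.ord) : β + 1 < ν.ord := by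
  rw [Ordinal.add_one_eq_succ]
  exact (ord_limit hν).succ_lt hβ

theorem len_lt_ord (hν : ℵ₀ ≤ ν) (s : SeqLT ν.ord ν.ord) : s.len < ν.ord := by
  have := s.len_lt; rwa [ord_sup_one hν] at this

theorem lt_sup_one (hν : ℵ₀ ≤ ν) {β : Ordinal.{u}} (hβ : β < ν.ord) : β < ν.ord ⊔ 1 := by
  rwa [ord_sup_one hν]

theorem zero_lt_ord (hν : ℵ₀ ≤ ν) : (0 : Ordinal.{u}) < ν.ord :=
  (ord_limit hν).pos

theorem bsup_lt_ord' (hreg : ν.IsRegular) {γ : Ordinal.{u}} (hγ : γ < ν.ord)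
    (f : ∀ α < γ, Ordinal.{u}) (hf : ∀ α h, f α h < ν.ord) :
    Ordinal.bsup γ f < ν.ord := by
  apply Ordinal.bsup_lt_ord _ (fun i hi => hf i hi)
  rw [hreg.cof_eq]
  exact Cardinal.lt_ord.mp hγ

theorem two_mul_lt_ord (hreg : ν.IsRegular) {δ : Ordinal.{u}} (hδ : δ < ν.ord) :
    2 * δ < ν.ord := by
  rw [Cardinal.lt_ord, Ordinal.card_mul]
  have hδc : δ.card < ν := Cardinal.lt_ord.mp hδ
  exact Cardinal.mul_lt_of_lt hreg.aleph0_le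
    (lt_of_lt_of_le (by simpa using Cardinal.nat_lt_aleph0 2) hreg.aleph0_le) hδc

theorem even_or_odd (γ : Ordinal.{u}) : EvenOrd γ ∨ OddOrd γ := by
  have h := Ordinal.div_add_mod γ 2
  have hm : γ % 2 < 2 := Ordinal.mod_lt γ (by norm_num)
  have h2 : (2 : Ordinal) = 1 + 1 := by norm_num
  have hm1 : γ % 2 ≤ 1 := by
    rw [← Order.lt_succ_iff, ← Ordinal.add_one_eq_succ, ← h2]; exact hm
  rcases lt_or_eq_of_le hm1 with h1 | h1
  · left; refine ⟨γ / 2, ?_⟩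
    rw [Ordinal.lt_one_iff_zero] at h1
    nth_rewrite 1 [← h]; rw [h1, add_zero]
  · right; refine ⟨γ / 2, ?_⟩
    nth_rewrite 1 [← h]; rw [h1]

theorem not_even_odd {γ : Ordinal.{u}} (h : EvenOrd γ) (h' : OddOrd γ) : False := by
  obtain ⟨δ, rfl⟩ := h
  obtain ⟨δ', he⟩ := h'
  have hlt : 2 * δ' < 2 * δ := by
    rw [he, Ordinal.add_one_eq_succ]; exact Order.lt_succ _
  have hd : δ' < δ := by
    rwa [mul_lt_mul_iff_right₀ (by norm_num : (0:Ordinal) < 2)] at hlt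
  have h1 : δ' + 1 ≤ δ := by rw [Ordinal.add_one_eq_succ]; exact Order.succ_le_iff.mpr hd
  have h2 : 2 * (δ' + 1) ≤ 2 * δ := mul_le_mul_right h1 2
  rw [mul_add, mul_one, he] at h2
  have : (2:Ordinal) ≤ 1 := le_of_add_le_add_left h2
  norm_num at this



open TopologicalSpace

theorem prefix_mono {s m : SeqLT ν.ord ν.ord} {x : SeqFull ν.ord ν.ord}
    (h : s.le m) (hm : m.prefixOf x) : s.prefixOf x := fun β hβ =>
  (h.2 β hβ).trans (hm β (hβ.trans_le h.1))

theorem basicOpen_mono {s m : SeqLT ν.ord ν.ord} (h : s.le m) :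
    basicOpen m ⊆ basicOpen s := fun _ hx => prefix_mono h hx

theorem prefix_comparable {s r : SeqLT ν.ord ν.ord} {x : SeqFull ν.ord ν.ord}
    (hs : s.prefixOf x) (hr : r.prefixOf x) : s.le r ∨ r.le s := by
  rcases le_total s.len r.len with h | h
  · exact Or.inl ⟨h, fun β hβ => (hs β hβ).trans (hr β (hβ.trans_le h)).symm⟩
  · exact Or.inr ⟨h, fun β hβ => (hr β hβ).trans (hs β (hβ.trans_le h)).symm⟩

/-- The element of `ν^ν` extending `b` by zeros. -/
def pad (hν : ℵ₀ ≤ ν) (b : SeqLT ν.ord ν.ord) : SeqFull ν.ord ν.ord where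
  val β := if β < b.len then b.val β else 0
  val_lt β hβ := by
    split
    · exact b.val_lt β ‹_›
    · exact zero_lt_ord hν
  val_zero β hβ := by
    rw [if_neg]
    exact fun h => absurd ((len_lt_ord hν b).trans_le hβ) h.asymm

theorem pad_mem (hν : ℵ₀ ≤ ν) (b : SeqLT ν.ord ν.ord) : pad hν b ∈ basicOpen b :=
  fun β hβ => by simp [pad, hβ]

theorem res_len (hν : ℵ₀ ≤ ν) (x : SeqFull ν.ord ν.ord) {β : Ordinal.{u}}
    (hβ : β < ν.ord) : (x.res β).len = β := by
  rw [SeqFull.res, dif_pos (lt_sup_one hν hβ)]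

theorem res_prefix (hν : ℵ₀ ≤ ν) (x : SeqFull ν.ord ν.ord) {β : Ordinal.{u}}
    (hβ : β < ν.ord) : (x.res β).prefixOf x := by
  intro γ hγ
  rw [res_len hν x hβ] at hγ
  rw [SeqFull.res, dif_pos (lt_sup_one hν hβ)]
  simp [hγ]

theorem le_res (hν : ℵ₀ ≤ ν) {b : SeqLT ν.ord ν.ord} {x : SeqFull ν.ord ν.ord}
    (hb : b.prefixOf x) {β : Ordinal.{u}} (hβ : β < ν.ord) (hlb : b.len ≤ β) :
    b.le (x.res β) := by
  refine ⟨by rw [res_len hν x hβ]; exact hlb, fun γ hγ => ?_⟩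
  rw [SeqFull.res, dif_pos (lt_sup_one hν hβ)]
  simp only [if_pos (hγ.trans_le hlb)]
  exact hb γ hγ

theorem empty_prefix (x : SeqFull ν.ord ν.ord) : (SeqLT.empty ν.ord ν.ord).prefixOf x :=
  fun β hβ => absurd hβ (not_lt_zero : ¬ β < 0)

theorem basicOpen_empty_eq : basicOpen (SeqLT.empty ν.ord ν.ord) = (Set.univ : Set (SeqFull ν.ord ν.ord)) :=
  Set.eq_univ_of_forall empty_prefix

theorem isBasis : IsTopologicalBasis {U : Set (SeqFull ν.ord ν.ord) | ∃ t, U = basicOpen t} := by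
  refine ⟨?_, ?_, rfl⟩
  · rintro U₁ ⟨s, rfl⟩ U₂ ⟨r, rfl⟩ x ⟨hx₁, hx₂⟩
    rcases prefix_comparable hx₁ hx₂ with h | h
    · exact ⟨basicOpen r, ⟨r, rfl⟩, hx₂, Set.subset_inter (basicOpen_mono h) le_rfl⟩
    · exact ⟨basicOpen s, ⟨s, rfl⟩, hx₁, Set.subset_inter le_rfl (basicOpen_mono h)⟩
  · rw [Set.sUnion_eq_univ_iff]
    exact fun x => ⟨basicOpen (SeqLT.empty ν.ord ν.ord), ⟨_, rfl⟩, empty_prefix x⟩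

theorem isOpen_basicOpen (s : SeqLT ν.ord ν.ord) : IsOpen (basicOpen s) :=
  isOpen_generateFrom_of_mem ⟨s, rfl⟩

theorem mem_closure_iff' {S : Set (SeqFull ν.ord ν.ord)} {x : SeqFull ν.ord ν.ord} :
    x ∈ closure S ↔ ∀ r : SeqLT ν.ord ν.ord, r.prefixOf x → (basicOpen r ∩ S).Nonempty := by
  rw [isBasis.mem_closure_iff]
  constructor
  · intro h r hr; exact h (basicOpen r) ⟨r, rfl⟩ hr
  · rintro h U ⟨r, rfl⟩ hx; exact h r hx

theorem exists_slt_common (hν : ℵ₀ ≤ ν) {b r : SeqLT ν.ord ν.ord} {x : SeqFull ν.ord ν.ord}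
    (hb : b.prefixOf x) (hr : r.prefixOf x) :
    ∃ m : SeqLT ν.ord ν.ord, b.slt m ∧ r.le m ∧ m.prefixOf x := by
  set β := max (b.len + 1) (r.len) with hβdef
  have hβ : β < ν.ord := by
    rw [hβdef]
    exact max_lt (succ_lt_ord hν (len_lt_ord hν b)) (len_lt_ord hν r)
  refine ⟨x.res β, ⟨le_res hν hb hβ ?_, ?_⟩, le_res hν hr hβ (le_max_right _ _), res_prefix hν x hβ⟩
  · exact le_of_lt (lt_of_lt_of_le (by rw [Ordinal.add_one_eq_succ]; exact Order.lt_succ _)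
      (le_max_left _ _))
  · rw [res_len hν x hβ]
    exact lt_of_lt_of_le (by rw [Ordinal.add_one_eq_succ]; exact Order.lt_succ _) (le_max_left _ _)

theorem image_val_pre {B F : Set (SeqFull ν.ord ν.ord)} :
    Subtype.val '' {x : ↥B | (x : SeqFull ν.ord ν.ord) ∈ F} = F ∩ B := by
  ext y
  constructor
  · rintro ⟨⟨z, hzB⟩, hz, rfl⟩; exact ⟨hz, hzB⟩
  · rintro ⟨h1, h2⟩; exact ⟨⟨y, h2⟩, h1, rfl⟩

theorem nwd_avoid (hν : ℵ₀ ≤ ν) {F : Set (SeqFull ν.ord ν.ord)} {t : SeqLT ν.ord ν.ord}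
    (hF : NowhereDenseIn F (basicOpen t)) {b : SeqLT ν.ord ν.ord} (hb : t.le b) :
    ∃ m : SeqLT ν.ord ν.ord, b.slt m ∧ t.le m ∧ basicOpen m ∩ F = ∅ := by
  set B := basicOpen t with hB
  set S : Set ↥B := {x : ↥B | (x : SeqFull ν.ord ν.ord) ∈ F} with hS
  have hint : interior (closure S) = ∅ := hF.2
  set V : Set ↥B := Subtype.val ⁻¹' basicOpen b with hV
  have hVopen : IsOpen V := (isOpen_basicOpen b).preimage continuous_subtype_val
  have hz0 : (⟨pad hν b, basicOpen_mono hb (pad_mem hν b)⟩ : ↥B) ∈ V := pad_mem hν b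
  have hnsub : ¬ V ⊆ closure S := by
    intro hsub
    have := interior_maximal hsub hVopen
    rw [hint] at this
    exact this hz0
  obtain ⟨z, hzV, hzns⟩ := Set.not_subset.mp hnsub
  rw [closure_subtype, image_val_pre, Set.inter_eq_left.mpr hF.1] at hzns
  have hzF := hzns
  rw [mem_closure_iff'] at hzF
  push_neg at hzF
  obtain ⟨r, hrz, hrF⟩ := hzF
  obtain ⟨m, hbm, hrm, _⟩ := exists_slt_common hν (hzV : b.prefixOf (z : SeqFull ν.ord ν.ord)) hrz
  refine ⟨m, hbm, SeqLT.le_trans hb hbm.1, ?_⟩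
  rw [Set.eq_empty_iff_forall_notMem]
  intro y hy
  have hmem : y ∈ basicOpen r ∩ F := ⟨basicOpen_mono hrm hy.1, hy.2⟩
  rw [Set.eq_empty_iff_forall_notMem] at hrF
  exact hrF y hmem

theorem avoid_nwd (hν : ℵ₀ ≤ ν) {F : Set (SeqFull ν.ord ν.ord)} {t : SeqLT ν.ord ν.ord}
    (hFB : F ⊆ basicOpen t)
    (h : ∀ b : SeqLT ν.ord ν.ord, t.le b → ∃ m, b.slt m ∧ basicOpen m ∩ F = ∅) :
    NowhereDenseIn F (basicOpen t) := by
  refine ⟨hFB, ?_⟩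
  rw [Set.eq_empty_iff_forall_notMem]
  rintro z hz
  obtain ⟨V, hVsub, hVopen, hzV⟩ := mem_interior.mp hz
  obtain ⟨W, hWopen, hWeq⟩ := isOpen_induced_iff.mp hVopen
  have hzW : (z : SeqFull ν.ord ν.ord) ∈ W := by rw [← hWeq] at hzV; exact hzV
  obtain ⟨U, ⟨r, rfl⟩, hzr, hrW⟩ := isBasis.exists_subset_of_mem_open hzW hWopen
  have hzt : t.prefixOf (z : SeqFull ν.ord ν.ord) := z.2
  obtain ⟨m0, hrm0, htm0, _⟩ := exists_slt_common hν hzr hzt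
  obtain ⟨m, hm0m, hmF⟩ := h m0 htm0
  set x := pad hν m with hx
  have hxm : x ∈ basicOpen m := pad_mem hν m
  have hxB : x ∈ basicOpen t :=
    basicOpen_mono (SeqLT.le_trans htm0 hm0m.1) hxm
  have hxV : (⟨x, hxB⟩ : ↥(basicOpen t)) ∈ V := by
    rw [← hWeq]
    exact hrW (basicOpen_mono (SeqLT.le_trans hrm0.1 hm0m.1) hxm)
  have hxc := hVsub hxV
  rw [closure_subtype, image_val_pre, Set.inter_eq_left.mpr hFB, mem_closure_iff'] at hxc
  obtain ⟨y, hy⟩ := hxc m hxm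
  rw [Set.eq_empty_iff_forall_notMem] at hmF
  exact hmF y hy

/-! ### Unions of chains and outcomes -/

def chainLen (p : Play ν.ord ν.ord) (γ : Ordinal.{u}) : Ordinal.{u} :=
  Ordinal.bsup γ (fun α _ => (p α).len)

def chainVal (p : Play ν.ord ν.ord) (γ β : Ordinal.{u}) : Ordinal.{u} :=
  @dite _ (∃ α, α < γ ∧ β < (p α).len) (Classical.dec _)
    (fun h => (p h.choose).val β) (fun _ => 0)

theorem chainVal_lt (hν : ℵ₀ ≤ ν) (p : Play ν.ord ν.ord) (γ β : Ordinal.{u}) :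
    chainVal p γ β < ν.ord := by
  rw [chainVal]
  split
  · next h => exact (p h.choose).val_lt β h.choose_spec.2
  · exact zero_lt_ord hν

theorem chainVal_zero (p : Play ν.ord ν.ord) (γ : Ordinal.{u}) {β : Ordinal.{u}}
    (hβ : chainLen p γ ≤ β) : chainVal p γ β = 0 := by
  rw [chainVal, dif_neg]
  rintro ⟨α, hα, hβα⟩
  exact absurd (hβα.trans_le (Ordinal.le_bsup (fun α _ => (p α).len) α hα)) hβ.not_gt

/-- Any two members of a chain agree on common positions. -/
theorem chain_agree {p : Play ν.ord ν.ord} {γ : Ordinal.{u}}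
    (Hchain : ∀ α β, α < β → β < γ → (p α).slt (p β)) {α α' : Ordinal.{u}}
    (hα : α < γ) (hα' : α' < γ) {β : Ordinal.{u}} (h1 : β < (p α).len)
    (h2 : β < (p α').len) : (p α).val β = (p α').val β := by
  rcases lt_trichotomy α α' with h | rfl | h
  · exact (Hchain α α' h hα').1.2 β h1
  · rfl
  · exact ((Hchain α' α h hα).1.2 β h2).symm

theorem chainVal_eq {p : Play ν.ord ν.ord} {γ : Ordinal.{u}}
    (Hchain : ∀ α β, α < β → β < γ → (p α).slt (p β)) {α β : Ordinal.{u}}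
    (hα : α < γ) (hβ : β < (p α).len) : chainVal p γ β = (p α).val β := by
  have h : ∃ α, α < γ ∧ β < (p α).len := ⟨α, hα, hβ⟩
  rw [chainVal, dif_pos h]
  exact chain_agree Hchain h.choose_spec.1 hα h.choose_spec.2 hβ

theorem lt_chainLen {p : Play ν.ord ν.ord} {γ α : Ordinal.{u}} (hα : α < γ) :
    (p α).len ≤ chainLen p γ := Ordinal.le_bsup _ α hα

theorem chainLen_lt (hν : ℵ₀ ≤ ν) (hreg : ν.IsRegular) (p : Play ν.ord ν.ord)
    {γ : Ordinal.{u}} (hγ : γ < ν.ord) : chainLen p γ < ν.ord :=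
  bsup_lt_ord' hreg hγ _ (fun α _ => len_lt_ord hν (p α))

/-- The union of a chain of sequences, as a sequence. -/
def chainUnion (hν : ℵ₀ ≤ ν) (p : Play ν.ord ν.ord) (γ : Ordinal.{u}) : SeqLT ν.ord ν.ord :=
  if h : chainLen p γ < ν.ord ⊔ 1 then
    { len := chainLen p γ
      len_lt := h
      val := chainVal p γ
      val_lt := fun β _ => chainVal_lt hν p γ β
      val_zero := fun β hβ => chainVal_zero p γ hβ }
  else SeqLT.empty ν.ord ν.ord

theorem chainUnion_len (hν : ℵ₀ ≤ ν) (hreg : ν.IsRegular) (p : Play ν.ord ν.ord)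
    {γ : Ordinal.{u}} (hγ : γ < ν.ord) :
    (chainUnion hν p γ).len = chainLen p γ := by
  rw [chainUnion, dif_pos (lt_sup_one hν (chainLen_lt hν hreg p hγ))]

theorem chainUnion_val (hν : ℵ₀ ≤ ν) (hreg : ν.IsRegular) (p : Play ν.ord ν.ord)
    {γ : Ordinal.{u}} (hγ : γ < ν.ord) (β : Ordinal.{u}) :
    (chainUnion hν p γ).val β = chainVal p γ β := by
  rw [chainUnion, dif_pos (lt_sup_one hν (chainLen_lt hν hreg p hγ))]

theorem le_chainUnion (hν : ℵ₀ ≤ ν) (hreg : ν.IsRegular) {p : Play ν.ord ν.ord}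
    {γ : Ordinal.{u}} (hγ : γ < ν.ord)
    (Hchain : ∀ α β, α < β → β < γ → (p α).slt (p β)) {α : Ordinal.{u}} (hα : α < γ) :
    (p α).le (chainUnion hν p γ) := by
  constructor
  · rw [chainUnion_len hν hreg p hγ]; exact lt_chainLen hα
  · intro β hβ
    rw [chainUnion_val hν hreg p hγ, chainVal_eq Hchain hα hβ]

/-- The outcome of a full run. -/
def outcome (hν : ℵ₀ ≤ ν) (p : Play ν.ord ν.ord) : SeqFull ν.ord ν.ord where
  val := chainVal p ν.ord
  val_lt := fun β _ => chainVal_lt hν p ν.ord β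
  val_zero := fun β hβ => by
    rw [chainVal, dif_neg]
    rintro ⟨α, hα, hβα⟩
    exact absurd ((len_lt_ord hν (p α)).trans_le hβ) hβα.asymm

theorem outcome_prefix (hν : ℵ₀ ≤ ν) {p : Play ν.ord ν.ord}
    (Hchain : ∀ α β, α < β → β < ν.ord → (p α).slt (p β)) {α : Ordinal.{u}}
    (hα : α < ν.ord) : (p α).prefixOf (outcome hν p) := by
  intro β hβ
  exact (chainVal_eq Hchain hα hβ).symm

theorem len_ge_of_chain {p : Play ν.ord ν.ord}
    (Hchain : ∀ α β, α < β → β < ν.ord → (p α).slt (p β)) :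
    ∀ α, α < ν.ord → α ≤ (p α).len := by
  intro α
  induction α using Ordinal.induction with
  | _ α ih =>
    intro hα
    apply le_of_forall_lt
    intro β hβ
    exact lt_of_le_of_lt (ih β hβ (hβ.trans hα)) (Hchain β α hβ hα).2

theorem isOutcome_outcome (hν : ℵ₀ ≤ ν) {p : Play ν.ord ν.ord}
    (Hchain : ∀ α β, α < β → β < ν.ord → (p α).slt (p β)) :
    IsOutcome p (outcome hν p) := by
  refine ⟨fun α hα => outcome_prefix hν Hchain hα, fun β hβ => ?_⟩
  have h1 : β + 1 < ν.ord := succ_lt_ord hν hβ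
  refine ⟨β + 1, h1, lt_of_lt_of_le ?_ (len_ge_of_chain Hchain (β+1) h1)⟩
  rw [Ordinal.add_one_eq_succ]; exact Order.lt_succ β

/-! ### Order lemmas for sequences -/

theorem slt_trans {s r m : SeqLT ν.ord ν.ord} (h1 : s.slt r) (h2 : r.slt m) : s.slt m :=
  ⟨SeqLT.le_trans h1.1 h2.1, h1.2.trans h2.2⟩

theorem le_slt {s r m : SeqLT ν.ord ν.ord} (h1 : s.le r) (h2 : r.slt m) : s.slt m :=
  ⟨SeqLT.le_trans h1 h2.1, lt_of_le_of_lt h1.1 h2.2⟩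

theorem empty_le (b : SeqLT ν.ord ν.ord) : (SeqLT.empty ν.ord ν.ord).le b :=
  ⟨zero_le, fun β hβ => absurd hβ (not_lt_zero : ¬ β < 0)⟩

theorem succ_cancel {a b : Ordinal.{u}} (h : a + 1 = b + 1) : a = b := by
  have h1 : a < b + 1 := by rw [← h, Ordinal.add_one_eq_succ]; exact Order.lt_succ a
  have h2 : b < a + 1 := by rw [h, Ordinal.add_one_eq_succ]; exact Order.lt_succ b
  rw [Ordinal.add_one_eq_succ, Order.lt_succ_iff] at h1 h2
  exact le_antisymm h1 h2

theorem mul2_cancel {a b : Ordinal.{u}} (h : 2 * a = 2 * b) : a = b := by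
  rcases lt_trichotomy a b with hl | hl | hl
  · exact absurd ((mul_lt_mul_iff_right₀ (by norm_num : (0:Ordinal) < 2)).mpr hl)
      (by rw [h]; exact lt_irrefl _)
  · exact hl
  · exact absurd ((mul_lt_mul_iff_right₀ (by norm_num : (0:Ordinal) < 2)).mpr hl)
      (by rw [h]; exact lt_irrefl _)

/-- The `δ` with `γ = 2δ + 1` for odd `γ`. -/
def oddIdx (γ : Ordinal.{u}) : Ordinal.{u} :=
  @dite _ (OddOrd γ) (Classical.dec _) (fun h => h.choose) (fun _ => 0)

theorem oddIdx_spec {γ : Ordinal.{u}} (h : OddOrd γ) : γ = 2 * oddIdx γ + 1 := by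
  rw [oddIdx, dif_pos h]; exact h.choose_spec

theorem oddIdx_eq {δ : Ordinal.{u}} : oddIdx (2 * δ + 1) = δ := by
  have h : OddOrd (2 * δ + 1) := ⟨δ, rfl⟩
  exact (mul2_cancel (succ_cancel (oddIdx_spec h).symm))

/-- The `δ` with `γ = 2δ` for even `γ`. -/
def evenIdx (γ : Ordinal.{u}) : Ordinal.{u} :=
  @dite _ (EvenOrd γ) (Classical.dec _) (fun h => h.choose) (fun _ => 0)

theorem evenIdx_spec {γ : Ordinal.{u}} (h : EvenOrd γ) : γ = 2 * evenIdx γ := by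
  rw [evenIdx, dif_pos h]; exact h.choose_spec

theorem evenIdx_eq {δ : Ordinal.{u}} : evenIdx (2 * δ) = δ := by
  have h : EvenOrd (2 * δ) := ⟨δ, rfl⟩
  exact mul2_cancel (evenIdx_spec h).symm

theorem oddIdx_lt (hν : ℵ₀ ≤ ν) {γ : Ordinal.{u}} (h : OddOrd γ) (hγ : γ < ν.ord) :
    2 * oddIdx γ < γ := by
  nth_rewrite 2 [oddIdx_spec h]
  rw [Ordinal.add_one_eq_succ]; exact Order.lt_succ _

/-- Choice of a strict extension avoiding `F`. -/
def avoidSeq (F : Set (SeqFull ν.ord ν.ord)) (t b : SeqLT ν.ord ν.ord) : SeqLT ν.ord ν.ord :=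
  @dite _ (∃ m, b.slt m ∧ t.le m ∧ basicOpen m ∩ F = ∅) (Classical.dec _)
    (fun h => h.choose) (fun _ => b)

theorem avoidSeq_spec {F : Set (SeqFull ν.ord ν.ord)} {t b : SeqLT ν.ord ν.ord}
    (h : ∃ m, b.slt m ∧ t.le m ∧ basicOpen m ∩ F = ∅) :
    b.slt (avoidSeq F t b) ∧ t.le (avoidSeq F t b) ∧ basicOpen (avoidSeq F t b) ∩ F = ∅ := by
  rw [avoidSeq, dif_pos h]; exact h.choose_spec

theorem nwd_empty (hν : ℵ₀ ≤ ν) (t : SeqLT ν.ord ν.ord) :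
    NowhereDenseIn (∅ : Set (SeqFull ν.ord ν.ord)) (basicOpen t) := by
  apply avoid_nwd hν (Set.empty_subset _)
  intro b hb
  obtain ⟨m, hm, -, -⟩ := exists_slt_common hν (pad_mem hν b) (pad_mem hν b)
  exact ⟨m, hm, by simp⟩

theorem resPlay_resPlay {p : Play ν.ord ν.ord} {γ α : Ordinal.{u}} (h : α ≤ γ) :
    resPlay (resPlay p γ) α = resPlay p α := by
  funext β
  simp only [resPlay]
  split
  · next hβ => rw [if_pos (hβ.trans_le h)]
  · rfl

theorem resPlay_lt {p : Play ν.ord ν.ord} {γ α : Ordinal.{u}} (h : α < γ) :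
    resPlay p γ α = p α := by rw [resPlay, if_pos h]

/-! ### The counter-play of player II against a strategy of player I -/

/-- The run where player I follows `σ` and player II diagonalizes against the
nowhere dense sets `F β`. -/
def playB (hν : ℵ₀ ≤ ν) (σ : Strat ν.ord ν.ord) (t : SeqLT ν.ord ν.ord)
    (F : Ordinal.{u} → Set (SeqFull ν.ord ν.ord)) : Play ν.ord ν.ord :=
  WellFounded.fix Ordinal.lt_wf (fun γ rec =>
    @dite _ (EvenOrd γ) (Classical.dec _)
      (fun _ => σ γ (fun α => @dite _ (α < γ) (Classical.dec _)
        (fun h => rec α h) (fun _ => SeqLT.empty ν.ord ν.ord)))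
      (fun he => avoidSeq (F (oddIdx γ)) t
        (rec (2 * oddIdx γ) (by
          have ho : OddOrd γ := (even_or_odd γ).resolve_left he
          nth_rewrite 2 [oddIdx_spec ho]
          rw [Ordinal.add_one_eq_succ]; exact Order.lt_succ _))))

theorem playB_even {hν : ℵ₀ ≤ ν} {σ : Strat ν.ord ν.ord} {t : SeqLT ν.ord ν.ord}
    {F : Ordinal.{u} → Set (SeqFull ν.ord ν.ord)} {γ : Ordinal.{u}} (h : EvenOrd γ) :
    playB hν σ t F γ = σ γ (resPlay (playB hν σ t F) γ) := by
  conv_lhs => rw [playB, WellFounded.fix_eq, dif_pos h]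
  congr 1
  funext α
  rw [resPlay]
  split <;> rfl

theorem playB_odd {hν : ℵ₀ ≤ ν} {σ : Strat ν.ord ν.ord} {t : SeqLT ν.ord ν.ord}
    {F : Ordinal.{u} → Set (SeqFull ν.ord ν.ord)} {γ : Ordinal.{u}} (h : ¬EvenOrd γ) :
    playB hν σ t F γ =
      avoidSeq (F (oddIdx γ)) t (playB hν σ t F (2 * oddIdx γ)) := by
  conv_lhs => rw [playB, WellFounded.fix_eq, dif_neg h]
  rfl

section PlayB

variable {hν : ℵ₀ ≤ ν} {σ : Strat ν.ord ν.ord} {t : SeqLT ν.ord ν.ord}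
  {F : Ordinal.{u} → Set (SeqFull ν.ord ν.ord)}

theorem playB_good (hreg : ν.IsRegular)
    (hF : ∀ β, NowhereDenseIn (F β) (basicOpen t)) (hleg : LegalI t σ) :
    ∀ β, β < ν.ord →
      (∀ α, α < β → ((playB hν σ t F) α).slt ((playB hν σ t F) β)) ∧
        t.le ((playB hν σ t F) β) := by
  set P := playB hν σ t F with hP
  intro β
  induction β using Ordinal.induction with
  | _ β ih =>
  intro hβ
  have hpos : IsPos t (resPlay P β) β := by
    refine ⟨?_, ?_, ?_⟩
    · intro α α' hαα' hα'
      rw [resPlay_lt (hαα'.trans hα'), resPlay_lt hα']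
      exact (ih α' hα' (hα'.trans hβ)).1 α hαα'
    · intro h0
      rw [resPlay_lt h0]
      exact (ih 0 h0 (lt_of_le_of_lt (zero_le : (0:Ordinal) ≤ β) hβ)).2
    · intro α hα
      rw [resPlay, if_neg (not_lt.mpr hα)]
  rcases Classical.em (EvenOrd β) with he | he
  · have hmove := hleg β hβ he (resPlay P β) hpos
    have hPβ : P β = σ β (resPlay P β) := playB_even he
    have hchain : ∀ α, α < β → (P α).slt (P β) := by
      intro α hα
      have h1 := hmove.1 α hα
      rw [resPlay_lt hα] at h1
      rw [hPβ]; exact h1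
    refine ⟨hchain, ?_⟩
    rcases eq_or_lt_of_le (zero_le : (0:Ordinal) ≤ β) with h0 | h0
    · rw [hPβ]
      exact hmove.2 h0.symm
    · exact SeqLT.le_trans (ih 0 h0 (h0.trans hβ)).2 (hchain 0 h0).1
  · have ho : OddOrd β := (even_or_odd β).resolve_left he
    have h2δ : 2 * oddIdx β < β := by
      conv_rhs => rw [oddIdx_spec ho]
      rw [Ordinal.add_one_eq_succ]; exact Order.lt_succ _
    have hble := (ih (2 * oddIdx β) h2δ (h2δ.trans hβ)).2
    have hex : ∃ m, (P (2 * oddIdx β)).slt m ∧ t.le m ∧ basicOpen m ∩ F (oddIdx β) = ∅ :=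
      nwd_avoid hν (hF (oddIdx β)) hble
    have hsp := avoidSeq_spec hex
    have hPβ : P β = avoidSeq (F (oddIdx β)) t (P (2 * oddIdx β)) := playB_odd he
    refine ⟨?_, by rw [hPβ]; exact hsp.2.1⟩
    intro α hα
    have hαle : α ≤ 2 * oddIdx β := by
      have hα' := hα
      rw [oddIdx_spec ho, Ordinal.add_one_eq_succ, Order.lt_succ_iff] at hα'
      exact hα'
    rw [hPβ]
    rcases lt_or_eq_of_le hαle with h | h
    · exact slt_trans ((ih (2 * oddIdx β) h2δ (h2δ.trans hβ)).1 α h) hsp.1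
    · rw [h]; exact hsp.1

theorem playB_pos (hreg : ν.IsRegular)
    (hF : ∀ β, NowhereDenseIn (F β) (basicOpen t)) (hleg : LegalI t σ) :
    IsPos t (resPlay (playB hν σ t F) ν.ord) ν.ord := by
  have hg := playB_good (hν := hν) hreg hF hleg
  refine ⟨?_, ?_, ?_⟩
  · intro α α' hαα' hα'
    rw [resPlay_lt (hαα'.trans hα'), resPlay_lt hα']
    exact (hg α' hα').1 α hαα'
  · intro h0
    rw [resPlay_lt h0]
    exact (hg 0 h0).2
  · intro α hα
    rw [resPlay, if_neg (not_lt.mpr hα)]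

theorem playB_follows (hreg : ν.IsRegular)
    (hF : ∀ β, NowhereDenseIn (F β) (basicOpen t)) (hleg : LegalI t σ) :
    FollowsI σ (resPlay (playB hν σ t F) ν.ord) ν.ord := by
  intro α hα he
  rw [resPlay_lt hα, resPlay_resPlay hα.le]
  exact playB_even he

theorem playB_avoid (hreg : ν.IsRegular)
    (hF : ∀ β, NowhereDenseIn (F β) (basicOpen t)) (hleg : LegalI t σ)
    {δ : Ordinal.{u}} (hδ : 2 * δ + 1 < ν.ord) :
    basicOpen (playB hν σ t F (2 * δ + 1)) ∩ F δ = ∅ := by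
  set P := playB hν σ t F with hP
  have ho : OddOrd (2 * δ + 1) := ⟨δ, rfl⟩
  have he : ¬EvenOrd (2 * δ + 1) := fun h => not_even_odd h ho
  have h2δ : 2 * δ < 2 * δ + 1 := by
    rw [Ordinal.add_one_eq_succ]; exact Order.lt_succ _
  have hble := (playB_good (hν := hν) hreg hF hleg (2 * δ) (h2δ.trans hδ)).2
  have hex : ∃ m, (P (2 * δ)).slt m ∧ t.le m ∧ basicOpen m ∩ F δ = ∅ :=
    nwd_avoid hν (hF δ) hble
  have hPβ : P (2 * δ + 1) = avoidSeq (F δ) t (P (2 * δ)) := by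
    rw [hP]
    rw [playB_odd he, oddIdx_eq]
  rw [hPβ]
  exact (avoidSeq_spec hex).2.2

end PlayB

/-- If `A` is meager in `N_t`, then player I has no winning strategy. -/
theorem meager_implies_notwin (hν : ℵ₀ ≤ ν) (hreg : ν.IsRegular)
    {A : Set (SeqFull ν.ord ν.ord)} {t : SeqLT ν.ord ν.ord}
    (hM : MeagerIn A (basicOpen t)) : ¬WinIStrat t A := by
  rintro ⟨σ, hleg, hwin⟩
  obtain ⟨F0, hF0, hAeq⟩ := hM
  set F : Ordinal.{u} → Set (SeqFull ν.ord ν.ord) := fun β =>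
    @dite _ (β < ν.ord) (Classical.dec _) (fun h => F0 ⟨β, h⟩) (fun _ => ∅) with hFdef
  have hF : ∀ β, NowhereDenseIn (F β) (basicOpen t) := by
    intro β
    rw [hFdef]
    dsimp only
    split
    · exact hF0 _
    · exact nwd_empty hν t
  set P := playB hν σ t F with hP
  set p := resPlay P ν.ord with hp
  obtain ⟨x, hout, hxA⟩ := hwin p (playB_pos hreg hF hleg) (playB_follows hreg hF hleg)
  have hg := playB_good (hν := hν) hreg hF hleg
  have hxt : x ∈ basicOpen t := by
    have h0 : (0 : Ordinal.{u}) < ν.ord := zero_lt_ord hν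
    have h1 : (p 0).prefixOf x := hout.1 0 h0
    have h2 : t.le (p 0) := by rw [hp, resPlay_lt h0]; exact (hg 0 h0).2
    exact prefix_mono h2 h1
  have hxAt : x ∈ A ∩ basicOpen t := ⟨hxA, hxt⟩
  rw [hAeq] at hxAt
  obtain ⟨i, hxi⟩ := Set.mem_iUnion.mp hxAt
  obtain ⟨δ, hδ⟩ := i
  have hγ : 2 * δ + 1 < ν.ord := succ_lt_ord hν (two_mul_lt_ord hreg hδ)
  have hav := playB_avoid (hν := hν) hreg hF hleg hγ
  have hxp : x ∈ basicOpen (P (2 * δ + 1)) := by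
    have := hout.1 (2 * δ + 1) hγ
    rw [hp, resPlay_lt hγ] at this
    exact this
  have hxF : x ∈ F δ := by
    rw [hFdef]; dsimp only; rw [dif_pos hδ]; exact hxi
  rw [Set.eq_empty_iff_forall_notMem] at hav
  exact hav x ⟨hxp, hxF⟩

theorem evenOrd_zero : EvenOrd (0 : Ordinal.{u}) := ⟨0, by rw [mul_zero]⟩

/-- If `A ∩ N_t` is Baire and `A` is not meager in `N_t`, then player I wins. -/
theorem notmeager_implies_win (hν : ℵ₀ ≤ ν) (hreg : ν.IsRegular)
    {A : Set (SeqFull ν.ord ν.ord)} {t : SeqLT ν.ord ν.ord}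
    (hBaire : BaireSet (A ∩ basicOpen t)) (hnm : ¬MeagerIn A (basicOpen t)) :
    WinIStrat t A := by
  obtain ⟨U, hUopen, hUm⟩ := hBaire
  obtain ⟨G0, hG0, hGeq⟩ := hUm
  rw [Set.inter_univ] at hGeq
  have hGnwd : ∀ i, NowhereDenseIn (G0 i) (basicOpen (SeqLT.empty ν.ord ν.ord)) := by
    rw [basicOpen_empty_eq]; exact hG0
  set G : Ordinal.{u} → Set (SeqFull ν.ord ν.ord) := fun β =>
    @dite _ (β < ν.ord) (Classical.dec _) (fun h => G0 ⟨β, h⟩) (fun _ => ∅) with hGdef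
  have hG : ∀ β, NowhereDenseIn (G β) (basicOpen (SeqLT.empty ν.ord ν.ord)) := by
    intro β
    rw [hGdef]; dsimp only
    split
    · exact hGnwd _
    · exact nwd_empty hν _
  have hexG : ∀ (b : SeqLT ν.ord ν.ord) (i : Ordinal.{u}),
      ∃ m, b.slt m ∧ (SeqLT.empty ν.ord ν.ord).le m ∧ basicOpen m ∩ G i = ∅ :=
    fun b i => nwd_avoid hν (hG i) (empty_le b)
  rcases Set.eq_empty_or_nonempty (U ∩ basicOpen t) with hUe | ⟨z, hzU, hzt⟩
  · exfalso
    apply hnm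
    refine ⟨fun i => G0 i ∩ (A ∩ basicOpen t), fun i => ?_, ?_⟩
    · apply avoid_nwd hν (fun x hx => hx.2.2)
      intro b hb
      obtain ⟨m, hm, -, hmG⟩ := nwd_avoid hν (hGnwd i) (empty_le b)
      refine ⟨m, hm, ?_⟩
      rw [Set.eq_empty_iff_forall_notMem] at hmG ⊢
      exact fun y hy => hmG y ⟨hy.1, hy.2.1⟩
    · apply Set.Subset.antisymm
      · intro x hx
        have hxU : x ∉ U := by
          intro hxU
          rw [Set.eq_empty_iff_forall_notMem] at hUe
          exact hUe x ⟨hxU, hx.2⟩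
        have hxs : x ∈ symmDiff (A ∩ basicOpen t) U := Set.mem_symmDiff.mpr (Or.inl ⟨hx, hxU⟩)
        rw [hGeq] at hxs
        obtain ⟨i, hxi⟩ := Set.mem_iUnion.mp hxs
        exact Set.mem_iUnion.mpr ⟨i, hxi, hx⟩
      · exact Set.iUnion_subset fun i x hx => hx.2
  · obtain ⟨V, ⟨r, rfl⟩, hzr, hrU⟩ := isBasis.exists_subset_of_mem_open hzU hUopen
    obtain ⟨s, hts, hrs, -⟩ := exists_slt_common hν (hzt : t.prefixOf z) hzr
    have hsU : basicOpen s ⊆ U := (basicOpen_mono hrs).trans hrU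
    set σA : Strat ν.ord ν.ord := fun γ p =>
      @dite _ (EvenOrd γ) (Classical.dec _)
        (fun _ => avoidSeq (G (evenIdx γ)) (SeqLT.empty ν.ord ν.ord)
          (@ite _ (γ = 0) (Classical.dec _) s (chainUnion hν p γ)))
        (fun _ => SeqLT.empty ν.ord ν.ord) with hσA
    refine ⟨σA, ?_, ?_⟩
    · -- legality
      intro γ hγ he p hpp
      have hσval : σA γ p = avoidSeq (G (evenIdx γ)) (SeqLT.empty ν.ord ν.ord)
          (@ite _ (γ = 0) (Classical.dec _) s (chainUnion hν p γ)) := by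
        rw [hσA]; dsimp only; rw [dif_pos he]
      have hsp := avoidSeq_spec (hexG (@ite _ (γ = 0) (Classical.dec _) s (chainUnion hν p γ))
        (evenIdx γ))
      constructor
      · intro α hα
        have hγ0 : γ ≠ 0 := by
          intro h; rw [h] at hα; exact absurd hα (not_lt_zero : ¬ α < 0)
        rw [hσval]
        have hb : (@ite _ (γ = 0) (Classical.dec _) s (chainUnion hν p γ)) =
            chainUnion hν p γ := if_neg hγ0
        rw [hb] at hsp ⊢
        exact le_slt (le_chainUnion hν hreg hγ hpp.1 hα) hsp.1
      · intro h0
        subst h0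
        have hb : (@ite _ ((0:Ordinal.{u}) = 0) (Classical.dec _) s
            (chainUnion hν p 0)) = s := if_pos rfl
        rw [hσval, hb]
        rw [hb] at hsp
        exact SeqLT.le_trans hts.1 hsp.1.1
    · -- winning
      intro p hpos hfol
      have Hchain := hpos.1
      refine ⟨outcome hν p, isOutcome_outcome hν Hchain, ?_⟩
      have hval : ∀ γ, γ < ν.ord → EvenOrd γ →
          ((@ite _ (γ = 0) (Classical.dec _) s (chainUnion hν (resPlay p γ) γ)).slt (p γ)) ∧
            basicOpen (p γ) ∩ G (evenIdx γ) = ∅ := by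
        intro γ hγ he
        have h1 : p γ = avoidSeq (G (evenIdx γ)) (SeqLT.empty ν.ord ν.ord)
            (@ite _ (γ = 0) (Classical.dec _) s (chainUnion hν (resPlay p γ) γ)) := by
          rw [hfol γ hγ he, hσA]; dsimp only; rw [dif_pos he]
        have hsp := avoidSeq_spec (hexG
          (@ite _ (γ = 0) (Classical.dec _) s (chainUnion hν (resPlay p γ) γ)) (evenIdx γ))
        rw [← h1] at hsp
        exact ⟨hsp.1, hsp.2.2⟩
      have h0ν : (0 : Ordinal.{u}) < ν.ord := zero_lt_ord hν
      have hzero := hval 0 h0ν evenOrd_zero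
      have hsp0 : s.le (p 0) := by
        have := hzero.1
        rw [if_pos rfl] at this
        exact this.1
      have hx0 : (outcome hν p) ∈ basicOpen (p 0) :=
        outcome_prefix hν Hchain h0ν
      have hxU : (outcome hν p) ∈ U := hsU (basicOpen_mono hsp0 hx0)
      have hxt : (outcome hν p) ∈ basicOpen t :=
        basicOpen_mono (SeqLT.le_trans hts.1 hsp0) hx0
      have hxG : ∀ i : {β : Ordinal.{u} // β < ν.ord}, (outcome hν p) ∉ G0 i := by
        rintro ⟨δ, hδ⟩ hmem
        have hγ : 2 * δ < ν.ord := two_mul_lt_ord hreg hδ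
        have hev : EvenOrd (2 * δ) := ⟨δ, rfl⟩
        have h := (hval (2 * δ) hγ hev).2
        have hxp : (outcome hν p) ∈ basicOpen (p (2 * δ)) :=
          outcome_prefix hν Hchain hγ
        rw [Set.eq_empty_iff_forall_notMem] at h
        apply h (outcome hν p)
        refine ⟨hxp, ?_⟩
        rw [evenIdx_eq, hGdef]; dsimp only; rw [dif_pos hδ]
        exact hmem
      have hxsym : (outcome hν p) ∉ symmDiff (A ∩ basicOpen t) U := by
        intro hmem
        rw [hGeq] at hmem
        obtain ⟨i, hi⟩ := Set.mem_iUnion.mp hmem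
        exact hxG i hi
      rw [Set.mem_symmDiff] at hxsym
      push_neg at hxsym
      exact (hxsym.2 hxU).1

end BMaux

/-- For an infinite regular cardinal `ν` with `ν^{<ν} = ν`, if `A ∩ N_t` is `ν`-Baire then
`A` is `ν`-meager in `N_t` iff player I has no winning strategy in `G^t_ν(A)`. -/
theorem statement15 (ν : Cardinal.{u}) (hreg : ν.IsRegular)
    (hpow : Cardinal.powerlt ν ν = ν)
    (A : Set (SeqFull ν.ord ν.ord)) (t : SeqLT ν.ord ν.ord)
    (hBaire : BaireSet (A ∩ basicOpen t)) :
    MeagerIn A (basicOpen t) ↔ ¬WinIStrat t A := by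
  have hν : Cardinal.aleph0 ≤ ν := hreg.aleph0_le
  constructor
  · exact fun hM => BMaux.meager_implies_notwin hν hreg hM
  · intro hnw
    by_contra hnm
    exact hnw (BMaux.notmeager_implies_win hν hreg hBaire hnm)

end
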